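/- Let K be a finite field and F a subfield of K, with q = |F| and ℓ = [K : F]. Let V be a finite-dimensional K-vector space, x : V → V a K-linear endomorphism, and m a natural number. Then the number of x-stable F-submodules U of V (i.e. F-submodules with x(U) ⊆ U) satisfying dim_F U = m is congruent, modulo Φ_ℓ(q), to the number of x-stable K-submodules W of V with ℓ·dim_K W = m. -/

import Mathlib

lemma aux_sum_modEq {ι : Type*} (s : Finset ι) (n : ℤ) (f g : ι → ℤ)
    (h : ∀ i ∈ s, f i ≡ g i [ZMOD n]) : (∑ i ∈ s, f i) ≡ (∑ i ∈ s, g i) [ZMOD n] := by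
  classical
  induction s using Finset.induction_on with
  | empty => simp [Int.ModEq.refl]
  | insert _ _ hx ih =>
    rw [Finset.sum_insert hx, Finset.sum_insert hx]
    exact (h _ (Finset.mem_insert_self _ _)).add
      (ih fun i hi => h i (Finset.mem_insert_of_mem hi))

open MulAction in
lemma aux_card_modEq_fixedPoints {G α : Type*} [Group G] [MulAction G α] [Finite α] (n : ℤ)
    (h : ∀ a : α, a ∉ fixedPoints G α → n ∣ (Nat.card (orbit G a) : ℤ)) :
    (Nat.card α : ℤ) ≡ (Nat.card (fixedPoints G α) : ℤ) [ZMOD n] := by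
  classical
  have := Fintype.ofFinite α
  have hc : Nat.card α = ∑ ω : orbitRel.Quotient G α, Nat.card ω.orbit := by
    rw [Nat.card_congr (selfEquivSigmaOrbits' G α)]
    rw [Nat.card_eq_fintype_card, Fintype.card_sigma]
    simp [Nat.card_eq_fintype_card]
  rw [hc]
  push_cast
  have key : ∀ ω : orbitRel.Quotient G α,
      (Nat.card ω.orbit : ℤ) ≡ (if ω.out ∈ fixedPoints G α then 1 else 0) [ZMOD n] := by
    intro ω
    rw [orbitRel.Quotient.orbit_eq_orbit_out ω Quotient.out_eq']
    by_cases hf : ω.out ∈ fixedPoints G α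
    · rw [if_pos hf]
      have hft : Fintype (orbit G ω.out) := Set.Finite.fintype (Set.toFinite _)
      have hone : Nat.card (orbit G ω.out) = 1 := by
        rw [Nat.card_eq_fintype_card, mem_fixedPoints_iff_card_orbit_eq_one.mp hf]
      rw [hone]; norm_num
    · rw [if_neg hf]
      exact (Int.modEq_zero_iff_dvd).mpr (h _ hf)
  calc (∑ ω : orbitRel.Quotient G α, (Nat.card ω.orbit : ℤ))
      ≡ ∑ ω : orbitRel.Quotient G α, (if ω.out ∈ fixedPoints G α then 1 else 0) [ZMOD n] :=
        aux_sum_modEq _ _ _ _ (fun ω _ => key ω)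
    _ = (Nat.card (fixedPoints G α) : ℤ) := by
        rw [Finset.sum_boole]
        norm_cast
        rw [Nat.card_eq_fintype_card, ← Set.toFinset_card]
        apply Finset.card_bij (fun ω _ => ω.out)
        · intro ω hω
          simp only [Finset.mem_filter] at hω
          simpa using hω.2
        · intro ω₁ _ ω₂ _ hout
          exact Quotient.out_injective hout
        · intro a ha
          simp only [Set.mem_toFinset] at ha
          refine ⟨Quotient.mk'' a, ?_, ?_⟩
          · have hrel : (Quotient.mk'' a : orbitRel.Quotient G α).out ∈ orbit G a := by
              rw [← orbitRel_apply (G := G)]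
              exact Quotient.mk_out a
            obtain ⟨g, hg⟩ := hrel
            have heq : (Quotient.mk'' a : orbitRel.Quotient G α).out = a := by
              rw [show (Quotient.mk'' a : MulAction.orbitRel.Quotient G α).out = g • a from hg.symm]; exact ha g
            simp only [Finset.mem_filter, Finset.mem_univ, true_and, heq]
            exact ha
          · have hrel : (Quotient.mk'' a : orbitRel.Quotient G α).out ∈ orbit G a := by
              rw [← orbitRel_apply (G := G)]
              exact Quotient.mk_out a
            obtain ⟨g, hg⟩ := hrel
            rw [show (Quotient.mk'' a : MulAction.orbitRel.Quotient G α).out = g • a from hg.symm]; exact ha g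

open Pointwise MulAction Module
theorem card_stable_submodules_modEq_cyclotomic (F K V : Type*) [Field F] [Field K]
    [Algebra F K] [Finite F] [Finite K] [AddCommGroup V] [Module K V] [Module F V]
    [IsScalarTower F K V] [FiniteDimensional K V] (x : V →ₗ[K] V) (m : ℕ) :
    (Nat.card {U : Submodule F V //
        (∀ u ∈ U, x u ∈ U) ∧ Module.finrank F U = m} : ℤ) ≡
      (Nat.card {W : Submodule K V //
        (∀ u ∈ W, x u ∈ W) ∧ Module.finrank F K * Module.finrank K W = m} : ℤ)
      [ZMOD ((Polynomial.cyclotomic (Module.finrank F K) ℤ).eval (Nat.card F : ℤ))] := by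
  classical
  haveI : Module.Finite F K := Module.Finite.of_finite
  haveI : Finite V := Module.finite_of_finite K
  haveI : SMulCommClass K F V :=
    ⟨fun k f v => by
      rw [← algebraMap_smul K f v, smul_smul, mul_comm, ← smul_smul, algebraMap_smul]⟩
  haveI : SMulCommClass Kˣ F V :=
    ⟨fun c f v => by rw [Units.smul_def, Units.smul_def, smul_comm]⟩
  -- the sub-mul-action of stable submodules of rank m
  set P : SubMulAction Kˣ (Submodule F V) :=
    { carrier := {U | (∀ u ∈ U, x u ∈ U) ∧ finrank F U = m}
      smul_mem' := by
        rintro c U ⟨hst, hrk⟩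
        constructor
        · intro u hu
          have hu' : u ∈ c • (U : Set V) := hu
          obtain ⟨v, hv, rfl⟩ := hu' 
          show x ((c : K) • v) ∈ c • U
          rw [map_smul, ← Units.smul_def]
          exact Submodule.smul_mem_pointwise_smul _ _ _ (hst v hv)
        · have h1 : (c • U) =
              U.map ((DistribMulAction.toLinearEquiv F V c : V ≃ₗ[F] V) : V →ₗ[F] V) := rfl
          rw [h1, LinearEquiv.finrank_map_eq]
          exact hrk } with hP
  have smul_eq_self : ∀ {s : P}, s ∈ fixedPoints Kˣ P → ∀ c : Kˣ,
      c • (s : Submodule F V) = (s : Submodule F V) := fun hs c => congrArg Subtype.val (hs c)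
  have mk_smul_mem : ∀ (s : P), s ∈ fixedPoints Kˣ P → ∀ (k : K) {u : V},
      u ∈ (s : Submodule F V) → k • u ∈ (s : Submodule F V) := by
    intro s hs k u hu
    rcases eq_or_ne k 0 with rfl | hk
    · rw [zero_smul]; exact Submodule.zero_mem _
    · have h1 : (Units.mk0 k hk) • (s : Submodule F V) = s := smul_eq_self hs _
      have h2 : (Units.mk0 k hk) • u ∈ (Units.mk0 k hk) • (s : Submodule F V) :=
        Submodule.smul_mem_pointwise_smul _ _ _ hu
      rw [h1] at h2
      simpa [Units.smul_def] using h2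
  let e2 : fixedPoints Kˣ P ≃ {W : Submodule K V //
      (∀ u ∈ W, x u ∈ W) ∧ finrank F K * finrank K W = m} :=
    { toFun := fun σ =>
        let W : Submodule K V :=
          { carrier := (σ.1 : Submodule F V)
            add_mem' := fun ha hb => (σ.1 : Submodule F V).add_mem ha hb
            zero_mem' := (σ.1 : Submodule F V).zero_mem
            smul_mem' := fun k u hu => mk_smul_mem σ.1 σ.2 k hu }
        have hU : (∀ u ∈ (σ.1 : Submodule F V), x u ∈ (σ.1 : Submodule F V)) ∧
            finrank F (σ.1 : Submodule F V) = m := σ.1.2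
        ⟨W, hU.1, by
          have h3 : finrank F K * finrank K W = finrank F W := finrank_mul_finrank F K W
          have h4 : finrank F (W.restrictScalars F) = finrank F W :=
            LinearEquiv.finrank_eq
              { toFun := fun v => ⟨v.1, v.2⟩, map_add' := fun _ _ => rfl,
                map_smul' := fun _ _ => rfl, invFun := fun v => ⟨v.1, v.2⟩,
                left_inv := fun _ => rfl, right_inv := fun _ => rfl }
          have h5 : W.restrictScalars F = (σ.1 : Submodule F V) := rfl
          rw [h3, ← h4, h5, hU.2]⟩
      invFun := fun τ =>
        ⟨⟨τ.1.restrictScalars F, by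
          constructor
          · exact fun u hu => τ.2.1 u hu
          · have h4 : finrank F (τ.1.restrictScalars F) = finrank F τ.1 :=
              LinearEquiv.finrank_eq
                { toFun := fun v => ⟨v.1, v.2⟩, map_add' := fun _ _ => rfl,
                  map_smul' := fun _ _ => rfl, invFun := fun v => ⟨v.1, v.2⟩,
                  left_inv := fun _ => rfl, right_inv := fun _ => rfl }
            have h3 : finrank F K * finrank K τ.1 = finrank F τ.1 := finrank_mul_finrank F K τ.1
            rw [h4, ← h3, τ.2.2]⟩, by
          intro c
          apply Subtype.ext
          show c • (τ.1.restrictScalars F) = τ.1.restrictScalars F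
          ext v
          constructor
          · rintro ⟨w, hw, rfl⟩
            exact τ.1.smul_mem (c : K) hw
          · intro hv
            refine ⟨(c⁻¹ : Kˣ) • v, τ.1.smul_mem _ hv, ?_⟩
            show (c : K) • ((c⁻¹ : Kˣ) : K) • v = v
            rw [smul_smul, Units.mul_inv, one_smul]⟩
      left_inv := fun σ => Subtype.ext (Subtype.ext rfl)
      right_inv := fun τ => Subtype.ext rfl }
  haveI : Finite (Submodule F V) :=
    Finite.of_injective (fun (U : Submodule F V) => (U : Set V)) SetLike.coe_injective
  -- divisibility of non-fixed orbit sizes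
  have hq2 : 2 ≤ Nat.card F := Finite.one_lt_card
  have hdvd : ∀ s : P, s ∉ fixedPoints Kˣ P →
      ((Polynomial.cyclotomic (finrank F K) ℤ).eval (Nat.card F : ℤ)) ∣
        (Nat.card (orbit Kˣ s) : ℤ) := by
    intro s hs
    obtain ⟨c0, hc0⟩ : ∃ c : Kˣ, c • s ≠ s := by
      by_contra h; push_neg at h; exact hs fun c => h c
    -- the intermediate field of scalars stabilizing U
    let A : Subalgebra F K :=
      { carrier := {k : K | ∀ u ∈ (s : Submodule F V), k • u ∈ (s : Submodule F V)}
        mul_mem' := fun {a b} ha hb u hu => by rw [mul_smul]; exact ha _ (hb _ hu)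
        one_mem' := fun u hu => by rwa [one_smul]
        add_mem' := fun {a b} ha hb u hu => by
          rw [add_smul]; exact Submodule.add_mem _ (ha _ hu) (hb _ hu)
        zero_mem' := fun u hu => by rw [zero_smul]; exact Submodule.zero_mem _
        algebraMap_mem' := fun f u hu => by
          rw [algebraMap_smul]; exact Submodule.smul_mem _ f hu }
    have hfinK := Fintype.ofFinite K
    have hA_inv : ∀ k ∈ A, k⁻¹ ∈ A := by
      intro k hk
      rcases eq_or_ne k 0 with rfl | hk0
      · rw [inv_zero]; exact A.zero_mem
      · have hcard2 : 2 ≤ Fintype.card K := Fintype.one_lt_card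
        have hcard : k ^ (Fintype.card K - 1) = 1 := FiniteField.pow_card_sub_one_eq_one k hk0
        have h2 : k * k ^ (Fintype.card K - 2) = 1 := by
          rw [← pow_succ']
          have he : Fintype.card K - 2 + 1 = Fintype.card K - 1 := by omega
          rw [he, hcard]
        have hkinv : k⁻¹ = k ^ (Fintype.card K - 2) :=
          (inv_eq_of_mul_eq_one_right h2).symm ▸ rfl
        rw [inv_eq_of_mul_eq_one_left ?hh]
        case hh => rw [mul_comm]; exact h2
        exact pow_mem hk _
    let E : IntermediateField F K := A.toIntermediateField hA_inv
    have hstab_mem : ∀ c : Kˣ, c ∈ stabilizer Kˣ s ↔ (c : K) ∈ A := by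
      intro c
      constructor
      · intro hc u hu
        have h1 : c • (s : Submodule F V) = s :=
          congrArg Subtype.val (mem_stabilizer_iff.mp hc)
        have h2 : c • u ∈ c • (s : Submodule F V) :=
          Submodule.smul_mem_pointwise_smul _ _ _ hu
        rw [h1] at h2
        simpa [Units.smul_def] using h2
      · intro hc
        show c • s = s
        apply Subtype.ext
        show c • (s : Submodule F V) = s
        apply le_antisymm
        · rintro v ⟨w, hw, rfl⟩
          exact hc w hw
        · intro v hv
          refine ⟨(c⁻¹ : Kˣ) • v, ?_, ?_⟩
          · have hci : ((c⁻¹ : Kˣ) : K) ∈ A := by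
              have := hA_inv _ hc
              rwa [← Units.val_inv_eq_inv_val] at this
            exact hci v hv
          · show (c : K) • (((c⁻¹ : Kˣ) : K) • v) = v
            rw [smul_smul, ← Units.val_mul, mul_inv_cancel, Units.val_one, one_smul]
    let e3 : stabilizer Kˣ s ≃ {a : E // a ≠ 0} :=
      { toFun := fun c => ⟨⟨(c.1 : K), (hstab_mem _).mp c.2⟩, by
          simp only [ne_eq, Subtype.ext_iff]
          exact_mod_cast Units.ne_zero c.1⟩
        invFun := fun a => ⟨Units.mk0 (a.1 : K) (by
            intro h0
            exact a.2 (Subtype.ext h0)), (hstab_mem _).mpr a.1.2⟩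
        left_inv := fun c => Subtype.ext (Units.ext rfl)
        right_inv := fun a => Subtype.ext (Subtype.ext rfl) }
    have hcard_stab : Nat.card (stabilizer Kˣ s) = Nat.card E - 1 := by
      rw [Nat.card_congr e3, ← Nat.card_congr (unitsEquivNeZero (G₀ := E)), Nat.card_units]
    have horb : Nat.card (orbit Kˣ s) * Nat.card (stabilizer Kˣ s) = Nat.card Kˣ := by
      rw [Nat.card_congr (orbitEquivQuotientStabilizer Kˣ s)]
      exact Subgroup.index_mul_card _
    have hfinE := Fintype.ofFinite E
    have hfinF := Fintype.ofFinite F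
    have hcardK : Nat.card K = Nat.card F ^ finrank F K := by
      rw [Nat.card_eq_fintype_card, Nat.card_eq_fintype_card,
        card_eq_pow_finrank (K := F) (V := K)]
    have hcardE : Nat.card E = Nat.card F ^ finrank F E := by
      rw [Nat.card_eq_fintype_card, Nat.card_eq_fintype_card,
        card_eq_pow_finrank (K := F) (V := E)]
    have hddvd : finrank F E ∣ finrank F K := ⟨finrank E K, (finrank_mul_finrank F E K).symm⟩
    have hlpos : 0 < finrank F K := finrank_pos
    have hdpos : 0 < finrank F E := finrank_pos
    have hne : finrank F E ≠ finrank F K := by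
      intro heq
      have htop : (Subalgebra.toSubmodule A) = ⊤ :=
        Submodule.eq_top_of_finrank_eq (by rw [← heq]; rfl)
      have hmem : (c0 : K) ∈ A := by
        have : (c0 : K) ∈ (Subalgebra.toSubmodule A) := htop ▸ Submodule.mem_top
        exact this
      exact hc0 ((hstab_mem c0).mpr hmem)
    -- number theory
    set q : ℤ := (Nat.card F : ℤ) with hqdef
    set l := finrank F K
    set d := finrank F E
    have hprod : ∀ n : ℕ, 0 < n →
        ∏ i ∈ n.divisors, (Polynomial.cyclotomic i ℤ).eval q = q ^ n - 1 := by
      intro n hn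
      have h := congrArg (Polynomial.eval q) (Polynomial.prod_cyclotomic_eq_X_pow_sub_one hn ℤ)
      simpa [Polynomial.eval_prod] using h
    have hnotmem : l ∉ d.divisors := by
      intro hmem
      exact hne (Nat.dvd_antisymm hddvd (Nat.mem_divisors.mp hmem).1)
    have hdvd2 : (q ^ d - 1) * (Polynomial.cyclotomic l ℤ).eval q ∣ q ^ l - 1 := by
      have heq2 : (q ^ d - 1) * (Polynomial.cyclotomic l ℤ).eval q =
          ∏ i ∈ insert l d.divisors, (Polynomial.cyclotomic i ℤ).eval q := by
        rw [Finset.prod_insert hnotmem, hprod d hdpos]; ring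
      rw [heq2, ← hprod l hlpos]
      apply Finset.prod_dvd_prod_of_subset
      intro i hi
      rcases Finset.mem_insert.mp hi with rfl | hi
      · exact Nat.mem_divisors.mpr ⟨dvd_rfl, hlpos.ne'⟩
      · exact Nat.divisors_subset_of_dvd hlpos.ne' hddvd hi
    have hEone : 1 ≤ Nat.card E := Nat.card_pos
    have hKone : 1 ≤ Nat.card K := Nat.card_pos
    rw [hcard_stab, Nat.card_units] at horb
    have horbZ : (Nat.card (orbit Kˣ s) : ℤ) * (q ^ d - 1) = q ^ l - 1 := by
      have h := congrArg (Nat.cast : ℕ → ℤ) horb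
      push_cast [Nat.cast_sub hEone, Nat.cast_sub hKone] at h
      rw [show ((Nat.card E : ℤ)) = q ^ d by rw [hqdef]; exact_mod_cast hcardE,
        show ((Nat.card K : ℤ)) = q ^ l by rw [hqdef]; exact_mod_cast hcardK] at h
      exact h
    have hqd1 : q ^ d - 1 ≠ 0 := by
      have h1 : (1 : ℤ) < q := by rw [hqdef]; exact_mod_cast hq2
      have : (1 : ℤ) < q ^ d := one_lt_pow₀ h1 hdpos.ne'
      omega
    obtain ⟨t, ht⟩ := hdvd2
    refine ⟨t, ?_⟩
    apply mul_left_cancel₀ hqd1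
    rw [mul_comm (q ^ d - 1), horbZ, ht]; ring
  -- final assembly
  have e1 : {U : Submodule F V // (∀ u ∈ U, x u ∈ U) ∧ finrank F U = m} ≃ P :=
    Equiv.subtypeEquivRight fun U => Iff.rfl
  calc ((Nat.card {U : Submodule F V //
        (∀ u ∈ U, x u ∈ U) ∧ finrank F U = m}) : ℤ)
      = (Nat.card P : ℤ) := by rw [Nat.card_congr e1]
    _ ≡ (Nat.card (fixedPoints Kˣ P) : ℤ)
        [ZMOD ((Polynomial.cyclotomic (finrank F K) ℤ).eval (Nat.card F : ℤ))] :=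
        aux_card_modEq_fixedPoints _ hdvd
    _ = _ := by rw [Nat.card_congr e2]
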